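/- Let w, z : closure(Ω) → (0, ∞) be functions on a compact set, and suppose the functions x ↦ w(x) + λ z(x)^{−p} w(x)^{−α} and x ↦ z(x) + μ w(x)^{−q} z(x)^{−β} are continuous (λ, μ, p, q, α, β > 0), w and z are bounded above and bounded below by positive constants, and for every x ∈ closure(Ω): (1 − λα w(x)^{−α−1} z(x)^{−p})(1 − μβ w(x)^{−q} z(x)^{−β−1}) − λμ p q w(x)^{−q−α−1} z(x)^{−p−β−1} ≥ 0 and 1 − μβ w(x)^{−q} z(x)^{−β−1} > 0. Then w and z are continuous on closure(Ω). -/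

import Mathlib

open Filter Topology

/-- Strict above-tangent inequality for `(a,b) ↦ a^(-α) * b^(-p)`. -/
lemma core2 {α p a b a' b' : ℝ} (hα : 0 < α) (hp : 0 < p)
    (ha : 0 < a) (hb : 0 < b) (ha' : 0 < a') (hb' : 0 < b')
    (hne : a' ≠ a ∨ b' ≠ b) :
    a ^ (-α) * b ^ (-p) - α * a ^ (-α - 1) * b ^ (-p) * (a' - a)
      - p * a ^ (-α) * b ^ (-p - 1) * (b' - b) < a' ^ (-α) * b' ^ (-p) := by
  set A := a ^ (-α) with hA
  set B := b ^ (-p) with hB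
  set C := a ^ (-α - 1) with hC
  set D := b ^ (-p - 1) with hD
  have hA0 : 0 < A := Real.rpow_pos_of_pos ha _
  have hB0 : 0 < B := Real.rpow_pos_of_pos hb _
  have hC0 : 0 < C := Real.rpow_pos_of_pos ha _
  have hD0 : 0 < D := Real.rpow_pos_of_pos hb _
  have hCA : C * a = A := by
    rw [hA, hC]
    nth_rewrite 2 [← Real.rpow_one a]
    rw [← Real.rpow_add ha]; norm_num
  have hDB : D * b = B := by
    rw [hB, hD]
    nth_rewrite 2 [← Real.rpow_one b]
    rw [← Real.rpow_add hb]; norm_num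
  set Δ : ℝ := -α * (Real.log a' - Real.log a) - p * (Real.log b' - Real.log b) with hΔ
  have h3 : a' ^ (-α) * b' ^ (-p) = A * B * Real.exp Δ := by
    rw [hA, hB, Real.rpow_def_of_pos ha, Real.rpow_def_of_pos hb,
      Real.rpow_def_of_pos ha', Real.rpow_def_of_pos hb', ← Real.exp_add, ← Real.exp_add, hΔ,
      ← Real.exp_add]
    ring_nf
  have h4 : 1 + Δ ≤ Real.exp Δ := by linarith [Real.add_one_le_exp Δ]
  have h7 : A * B * (1 + Δ) ≤ A * B * Real.exp Δ :=
    mul_le_mul_of_nonneg_left h4 (by positivity)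
  have h8 : A * B * Δ = -(α * C * B * (a * (Real.log a' - Real.log a)))
      - p * A * D * (b * (Real.log b' - Real.log b)) := by
    rw [← hCA, ← hDB]; ring
  -- log bounds
  have hla : a * (Real.log a' - Real.log a) ≤ a' - a := by
    have h := Real.log_le_sub_one_of_pos (div_pos ha' ha)
    rw [Real.log_div ha'.ne' ha.ne'] at h
    have := mul_le_mul_of_nonneg_left h ha.le
    calc a * (Real.log a' - Real.log a) ≤ a * (a' / a - 1) := this
      _ = a' - a := by field_simp
  have hlb : b * (Real.log b' - Real.log b) ≤ b' - b := by
    have h := Real.log_le_sub_one_of_pos (div_pos hb' hb)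
    rw [Real.log_div hb'.ne' hb.ne'] at h
    have := mul_le_mul_of_nonneg_left h hb.le
    calc b * (Real.log b' - Real.log b) ≤ b * (b' / b - 1) := this
      _ = b' - b := by field_simp
  have hstrict : a * (Real.log a' - Real.log a) < a' - a ∨
      b * (Real.log b' - Real.log b) < b' - b := by
    rcases hne with h | h
    · left
      have h1 : a' / a ≠ 1 := by
        intro hc; exact h (by field_simp at hc; linarith)
      have h := Real.log_lt_sub_one_of_pos (div_pos ha' ha) h1
      rw [Real.log_div ha'.ne' ha.ne'] at h
      have := mul_lt_mul_of_pos_left h ha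
      calc a * (Real.log a' - Real.log a) < a * (a' / a - 1) := this
        _ = a' - a := by field_simp
    · right
      have h1 : b' / b ≠ 1 := by
        intro hc; exact h (by field_simp at hc; linarith)
      have h := Real.log_lt_sub_one_of_pos (div_pos hb' hb) h1
      rw [Real.log_div hb'.ne' hb.ne'] at h
      have := mul_lt_mul_of_pos_left h hb
      calc b * (Real.log b' - Real.log b) < b * (b' / b - 1) := this
        _ = b' - b := by field_simp
  have hαCB : 0 < α * C * B := by positivity
  have hpAD : 0 < p * A * D := by positivity
  rcases hstrict with hs | hs
  · have h5 : α * C * B * (a * (Real.log a' - Real.log a)) < α * C * B * (a' - a) :=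
      mul_lt_mul_of_pos_left hs hαCB
    have h6 : p * A * D * (b * (Real.log b' - Real.log b)) ≤ p * A * D * (b' - b) :=
      mul_le_mul_of_nonneg_left hlb hpAD.le
    nlinarith [h3, h7, h8, h5, h6]
  · have h5 : α * C * B * (a * (Real.log a' - Real.log a)) ≤ α * C * B * (a' - a) :=
      mul_le_mul_of_nonneg_left hla hαCB.le
    have h6 : p * A * D * (b * (Real.log b' - Real.log b)) < p * A * D * (b' - b) :=
      mul_lt_mul_of_pos_left hs hpAD
    nlinarith [h3, h7, h8, h5, h6]


/-- Pure algebra contradiction lemma. -/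
lemma algcontra {u v fa FB GA gb fa' FB' GA' gb' : ℝ}
    (hFB : 0 < FB) (hGA : 0 < GA) (hFB' : 0 < FB') (hGA' : 0 < GA')
    (hfa : 0 < fa) (hgb : 0 < gb) (hfa' : 0 < fa') (hgb' : 0 < gb')
    (hDet : FB * GA ≤ fa * gb) (hDet' : FB' * GA' ≤ fa' * gb')
    (hI : fa * u - FB * v < 0) (hII : gb * v - GA * u < 0)
    (hIII : 0 < fa' * u - FB' * v) (hIV : 0 < gb' * v - GA' * u) : False := by
  rcases lt_trichotomy u 0 with hu0 | hu0 | hu0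
  · rcases le_or_gt 0 v with hv0 | hv0
    · nlinarith [mul_pos hfa' (neg_pos.mpr hu0), mul_nonneg hFB'.le hv0]
    · have k1 : fa' * (-u) * (gb' * (-v)) < FB' * (-v) * (GA' * (-u)) :=
        mul_lt_mul'' (by nlinarith) (by nlinarith)
          (mul_pos hfa' (neg_pos.mpr hu0)).le (mul_pos hgb' (neg_pos.mpr hv0)).le
      have k2 : FB' * GA' * ((-u) * (-v)) ≤ fa' * gb' * ((-u) * (-v)) :=
        mul_le_mul_of_nonneg_right hDet'
          (mul_pos (neg_pos.mpr hu0) (neg_pos.mpr hv0)).le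
      nlinarith [k1, k2]
  · rcases lt_trichotomy v 0 with hv0 | hv0 | hv0
    · nlinarith [mul_pos hgb' (neg_pos.mpr hv0), mul_pos hGA' (neg_pos.mpr hv0)]
    · rw [hu0, hv0] at hIII; simp at hIII
    · nlinarith [mul_pos hgb hv0]
  · rcases le_or_gt v 0 with hv0 | hv0
    · nlinarith [mul_pos hGA' hu0, mul_nonpos_of_nonneg_of_nonpos hgb'.le hv0]
    · have k1 : fa * u * (gb * v) < FB * v * (GA * u) :=
        mul_lt_mul'' (by nlinarith) (by nlinarith) (mul_pos hfa hu0).le (mul_pos hgb hv0).le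
      have k2 : FB * GA * (u * v) ≤ fa * gb * (u * v) :=
        mul_le_mul_of_nonneg_right hDet (mul_pos hu0 hv0).le
      nlinarith [k1, k2]

/-- Injectivity of the system under the determinant conditions. -/
lemma inj {lam mu p q α β a b a' b' : ℝ}
    (hlam : 0 < lam) (hmu : 0 < mu) (hp : 0 < p) (hq : 0 < q) (hα : 0 < α) (hβ : 0 < β)
    (ha : 0 < a) (hb : 0 < b) (ha' : 0 < a') (hb' : 0 < b')
    (hf : a + lam * b ^ (-p) * a ^ (-α) = a' + lam * b' ^ (-p) * a' ^ (-α))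
    (hg : b + mu * a ^ (-q) * b ^ (-β) = b' + mu * a' ^ (-q) * b' ^ (-β))
    (hdet : 0 ≤ (1 - lam * α * a ^ (-α - 1) * b ^ (-p)) *
          (1 - mu * β * a ^ (-q) * b ^ (-β - 1)) -
        lam * mu * p * q * a ^ (-q - α - 1) * b ^ (-p - β - 1))
    (hgb : 0 ≤ 1 - mu * β * a ^ (-q) * b ^ (-β - 1))
    (hdet' : 0 ≤ (1 - lam * α * a' ^ (-α - 1) * b' ^ (-p)) *
          (1 - mu * β * a' ^ (-q) * b' ^ (-β - 1)) -
        lam * mu * p * q * a' ^ (-q - α - 1) * b' ^ (-p - β - 1))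
    (hgb' : 0 ≤ 1 - mu * β * a' ^ (-q) * b' ^ (-β - 1)) :
    a = a' ∧ b = b' := by
  by_contra hcon
  have hne : a' ≠ a ∨ b' ≠ b := by
    by_contra h; push_neg at h; exact hcon ⟨h.1.symm, h.2.symm⟩
  have hne2 : a ≠ a' ∨ b ≠ b' := by rcases hne with h | h; exacts [Or.inl (Ne.symm h), Or.inr (Ne.symm h)]
  set u := a' - a with hu
  set v := b' - b with hv
  -- gradient quantities at (a,b)
  set fa := 1 - lam * α * a ^ (-α - 1) * b ^ (-p) with hfa
  set FB := lam * p * a ^ (-α) * b ^ (-p - 1) with hFB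
  set GA := mu * q * a ^ (-q - 1) * b ^ (-β) with hGA
  set gb := 1 - mu * β * a ^ (-q) * b ^ (-β - 1) with hgb2
  set fa' := 1 - lam * α * a' ^ (-α - 1) * b' ^ (-p) with hfa'
  set FB' := lam * p * a' ^ (-α) * b' ^ (-p - 1) with hFB'
  set GA' := mu * q * a' ^ (-q - 1) * b' ^ (-β) with hGA'
  set gb' := 1 - mu * β * a' ^ (-q) * b' ^ (-β - 1) with hgb2'
  have hFB0 : 0 < FB := by rw [hFB]; positivity
  have hGA0 : 0 < GA := by rw [hGA]; positivity
  have hFB0' : 0 < FB' := by rw [hFB']; positivity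
  have hGA0' : 0 < GA' := by rw [hGA']; positivity
  -- rewrite determinant products
  have eD : FB * GA = lam * mu * p * q * a ^ (-q - α - 1) * b ^ (-p - β - 1) := by
    rw [hFB, hGA, show (-q - α - 1 : ℝ) = -α + (-q - 1) by ring,
      show (-p - β - 1 : ℝ) = -p - 1 + -β by ring, Real.rpow_add ha, Real.rpow_add hb]
    ring
  have eD' : FB' * GA' = lam * mu * p * q * a' ^ (-q - α - 1) * b' ^ (-p - β - 1) := by
    rw [hFB', hGA', show (-q - α - 1 : ℝ) = -α + (-q - 1) by ring,
      show (-p - β - 1 : ℝ) = -p - 1 + -β by ring, Real.rpow_add ha', Real.rpow_add hb']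
    ring
  have hDet : FB * GA ≤ fa * gb := by rw [eD]; linarith
  have hDet' : FB' * GA' ≤ fa' * gb' := by rw [eD']; linarith
  -- positivity of fa, gb
  have hgb0 : 0 < gb := by
    rcases hgb.lt_or_eq with h | h
    · exact h
    · exfalso; rw [← h, mul_zero] at hDet; linarith [mul_pos hFB0 hGA0]
  have hfa0 : 0 < fa := by
    have h1 : 0 < fa * gb := (mul_pos hFB0 hGA0).trans_le hDet
    exact (mul_pos_iff_of_pos_right hgb0).mp h1
  have hgb0' : 0 < gb' := by
    rcases hgb'.lt_or_eq with h | h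
    · exact h
    · exfalso; rw [← h, mul_zero] at hDet'; linarith [mul_pos hFB0' hGA0']
  have hfa0' : 0 < fa' := by
    have h1 : 0 < fa' * gb' := (mul_pos hFB0' hGA0').trans_le hDet'
    exact (mul_pos_iff_of_pos_right hgb0').mp h1
  -- tangent inequalities
  -- (I): at (a,b) for f
  have tf := core2 hα hp ha hb ha' hb' hne
  have hI : fa * u - FB * v < 0 := by
    have : lam * (a ^ (-α) * b ^ (-p) - α * a ^ (-α - 1) * b ^ (-p) * (a' - a)
        - p * a ^ (-α) * b ^ (-p - 1) * (b' - b)) < lam * (a' ^ (-α) * b' ^ (-p)) :=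
      mul_lt_mul_of_pos_left tf hlam
    rw [hfa, hFB, hu, hv]; linarith [this, hf]
  have tg := core2 hβ hq hb ha hb' ha' (by tauto)
  have hII : gb * v - GA * u < 0 := by
    have : mu * (b ^ (-β) * a ^ (-q) - β * b ^ (-β - 1) * a ^ (-q) * (b' - b)
        - q * b ^ (-β) * a ^ (-q - 1) * (a' - a)) < mu * (b' ^ (-β) * a' ^ (-q)) :=
      mul_lt_mul_of_pos_left tg hmu
    rw [hgb2, hGA, hu, hv]; linarith [this, hg]
  have tf' := core2 hα hp ha' hb' ha hb (by tauto)
  have hIII : fa' * u - FB' * v > 0 := by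
    have : lam * (a' ^ (-α) * b' ^ (-p) - α * a' ^ (-α - 1) * b' ^ (-p) * (a - a')
        - p * a' ^ (-α) * b' ^ (-p - 1) * (b - b')) < lam * (a ^ (-α) * b ^ (-p)) :=
      mul_lt_mul_of_pos_left tf' hlam
    rw [hfa', hFB', hu, hv]; linarith [this, hf]
  have tg' := core2 hβ hq hb' ha' hb ha (by tauto)
  have hIV : gb' * v - GA' * u > 0 := by
    have : mu * (b' ^ (-β) * a' ^ (-q) - β * b' ^ (-β - 1) * a' ^ (-q) * (b - b')
        - q * b' ^ (-β) * a' ^ (-q - 1) * (a - a')) < mu * (b ^ (-β) * a ^ (-q)) :=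
      mul_lt_mul_of_pos_left tg' hmu
    rw [hgb2', hGA', hu, hv]; linarith [this, hg]
  exact algcontra hFB0 hGA0 hFB0' hGA0' hfa0 hgb0 hfa0' hgb0' hDet hDet' hI hII hIII hIV

theorem stmt_16 {N : ℕ} (K : Set (Fin N → ℝ)) (hK : IsCompact K)
    (w z : (Fin N → ℝ) → ℝ) (lam mu p q α β m M : ℝ)
    (hlam : 0 < lam) (hmu : 0 < mu) (hp : 0 < p) (hq : 0 < q)
    (hα : 0 < α) (hβ : 0 < β) (hm : 0 < m)
    (hwb : ∀ x ∈ K, m ≤ w x ∧ w x ≤ M) (hzb : ∀ x ∈ K, m ≤ z x ∧ z x ≤ M)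
    (hc1 : ContinuousOn (fun x => w x + lam * z x ^ (-p) * w x ^ (-α)) K)
    (hc2 : ContinuousOn (fun x => z x + mu * w x ^ (-q) * z x ^ (-β)) K)
    (hdet : ∀ x ∈ K,
      0 ≤ (1 - lam * α * w x ^ (-α - 1) * z x ^ (-p)) *
          (1 - mu * β * w x ^ (-q) * z x ^ (-β - 1)) -
        lam * mu * p * q * w x ^ (-q - α - 1) * z x ^ (-p - β - 1))
    (hpos : ∀ x ∈ K, 0 < 1 - mu * β * w x ^ (-q) * z x ^ (-β - 1)) :
    ContinuousOn w K ∧ ContinuousOn z K := by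
  have key : ∀ x₀ ∈ K, ContinuousWithinAt (fun x => (w x, z x)) K x₀ := by
    intro x₀ hx₀
    have haw : 0 < w x₀ := hm.trans_le (hwb x₀ hx₀).1
    have hbz : 0 < z x₀ := hm.trans_le (hzb x₀ hx₀).1
    have hNB : (𝓝[K] x₀).NeBot := mem_closure_iff_nhdsWithin_neBot.mp (subset_closure hx₀)
    have hs : IsCompact ((Set.Icc m M) ×ˢ (Set.Icc m M)) := isCompact_Icc.prod isCompact_Icc
    refine hs.tendsto_nhds_of_unique_mapClusterPt ?_ ?_
    · filter_upwards [self_mem_nhdsWithin] with x hx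
      exact Set.mk_mem_prod ⟨(hwb x hx).1, (hwb x hx).2⟩ ⟨(hzb x hx).1, (hzb x hx).2⟩
    · rintro ⟨a, b⟩ hab hcl
      have ha : 0 < a := hm.trans_le hab.1.1
      have hb : 0 < b := hm.trans_le hab.2.1
      -- continuity of rpow coordinates at (a,b)
      have h1 : ∀ r : ℝ, ContinuousAt (fun c : ℝ × ℝ => c.1 ^ r) (a, b) := fun r =>
        ContinuousAt.comp (g := fun x : ℝ => x ^ r) (f := Prod.fst) (x := (a, b))
          (Real.continuousAt_rpow_const a r (Or.inl ha.ne')) continuousAt_fst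
      have h2 : ∀ r : ℝ, ContinuousAt (fun c : ℝ × ℝ => c.2 ^ r) (a, b) := fun r =>
        ContinuousAt.comp (g := fun x : ℝ => x ^ r) (f := Prod.snd) (x := (a, b))
          (Real.continuousAt_rpow_const b r (Or.inl hb.ne')) continuousAt_snd
      have hΦf : ContinuousAt (fun c : ℝ × ℝ => c.1 + lam * c.2 ^ (-p) * c.1 ^ (-α)) (a, b) :=
        continuousAt_fst.add (((continuousAt_const.mul (h2 (-p))).mul (h1 (-α))))
      have hΦg : ContinuousAt (fun c : ℝ × ℝ => c.2 + mu * c.1 ^ (-q) * c.2 ^ (-β)) (a, b) :=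
        continuousAt_snd.add (((continuousAt_const.mul (h1 (-q))).mul (h2 (-β))))
      have hΦD : ContinuousAt (fun c : ℝ × ℝ =>
          (1 - lam * α * c.1 ^ (-α - 1) * c.2 ^ (-p)) *
            (1 - mu * β * c.1 ^ (-q) * c.2 ^ (-β - 1)) -
          lam * mu * p * q * c.1 ^ (-q - α - 1) * c.2 ^ (-p - β - 1)) (a, b) :=
        ((continuousAt_const.sub ((continuousAt_const.mul (h1 (-α - 1))).mul (h2 (-p)))).mul
          (continuousAt_const.sub ((continuousAt_const.mul (h1 (-q))).mul (h2 (-β - 1))))).sub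
          ((continuousAt_const.mul (h1 (-q - α - 1))).mul (h2 (-p - β - 1)))
      have hΦb : ContinuousAt (fun c : ℝ × ℝ =>
          1 - mu * β * c.1 ^ (-q) * c.2 ^ (-β - 1)) (a, b) :=
        continuousAt_const.sub ((continuousAt_const.mul (h1 (-q))).mul (h2 (-β - 1)))
      -- equality of the combined quantities
      have e1 : a + lam * b ^ (-p) * a ^ (-α)
          = w x₀ + lam * z x₀ ^ (-p) * w x₀ ^ (-α) := by
        have hmc := hcl.continuousAt_comp hΦf
        have htd : Tendsto ((fun c : ℝ × ℝ => c.1 + lam * c.2 ^ (-p) * c.1 ^ (-α)) ∘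
            fun x => (w x, z x)) (𝓝[K] x₀)
            (𝓝 (w x₀ + lam * z x₀ ^ (-p) * w x₀ ^ (-α))) := hc1 x₀ hx₀
        exact eq_of_nhds_neBot (hmc.clusterPt.mono htd)
      have e2 : b + mu * a ^ (-q) * b ^ (-β)
          = z x₀ + mu * w x₀ ^ (-q) * z x₀ ^ (-β) := by
        have hmc := hcl.continuousAt_comp hΦg
        have htd : Tendsto ((fun c : ℝ × ℝ => c.2 + mu * c.1 ^ (-q) * c.2 ^ (-β)) ∘
            fun x => (w x, z x)) (𝓝[K] x₀)
            (𝓝 (z x₀ + mu * w x₀ ^ (-q) * z x₀ ^ (-β))) := hc2 x₀ hx₀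
        exact eq_of_nhds_neBot (hmc.clusterPt.mono htd)
      -- the determinant conditions pass to the cluster point
      have e3 : 0 ≤ (1 - lam * α * a ^ (-α - 1) * b ^ (-p)) *
            (1 - mu * β * a ^ (-q) * b ^ (-β - 1)) -
          lam * mu * p * q * a ^ (-q - α - 1) * b ^ (-p - β - 1) := by
        by_contra h
        push_neg at h
        have hmc := hcl.continuousAt_comp hΦD
        have hfr : ∃ᶠ x in 𝓝[K] x₀,
            ((fun c : ℝ × ℝ =>
              (1 - lam * α * c.1 ^ (-α - 1) * c.2 ^ (-p)) *
                (1 - mu * β * c.1 ^ (-q) * c.2 ^ (-β - 1)) -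
              lam * mu * p * q * c.1 ^ (-q - α - 1) * c.2 ^ (-p - β - 1)) ∘
              fun x => (w x, z x)) x ∈ Set.Iio 0 :=
          mapClusterPt_iff_frequently.mp hmc _ (Iio_mem_nhds h)
        have hev : ∀ᶠ x in 𝓝[K] x₀, ¬ (((fun c : ℝ × ℝ =>
              (1 - lam * α * c.1 ^ (-α - 1) * c.2 ^ (-p)) *
                (1 - mu * β * c.1 ^ (-q) * c.2 ^ (-β - 1)) -
              lam * mu * p * q * c.1 ^ (-q - α - 1) * c.2 ^ (-p - β - 1)) ∘
              fun x => (w x, z x)) x ∈ Set.Iio 0) := by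
          filter_upwards [self_mem_nhdsWithin] with x hx
          exact not_lt.mpr (hdet x hx)
        exact (hfr.and_eventually hev).exists.elim fun x hx => hx.2 hx.1
      have e4 : 0 ≤ 1 - mu * β * a ^ (-q) * b ^ (-β - 1) := by
        by_contra h
        push_neg at h
        have hmc := hcl.continuousAt_comp hΦb
        have hfr : ∃ᶠ x in 𝓝[K] x₀,
            ((fun c : ℝ × ℝ => 1 - mu * β * c.1 ^ (-q) * c.2 ^ (-β - 1)) ∘
              fun x => (w x, z x)) x ∈ Set.Iio 0 :=
          mapClusterPt_iff_frequently.mp hmc _ (Iio_mem_nhds h)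
        have hev : ∀ᶠ x in 𝓝[K] x₀, ¬ (((fun c : ℝ × ℝ =>
              1 - mu * β * c.1 ^ (-q) * c.2 ^ (-β - 1)) ∘
              fun x => (w x, z x)) x ∈ Set.Iio 0) := by
          filter_upwards [self_mem_nhdsWithin] with x hx
          exact not_lt.mpr (hpos x hx).le
        exact (hfr.and_eventually hev).exists.elim fun x hx => hx.2 hx.1
      obtain ⟨hA, hB⟩ := inj hlam hmu hp hq hα hβ ha hb haw hbz e1 e2 e3 e4
        (hdet x₀ hx₀) (hpos x₀ hx₀).le
      exact Prod.ext hA hB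
  exact ⟨fun x₀ hx₀ => continuousAt_fst.comp_continuousWithinAt (key x₀ hx₀),
    fun x₀ hx₀ => continuousAt_snd.comp_continuousWithinAt (key x₀ hx₀)⟩
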